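/- In ℤ[C₇] one has σ₂(u) = 2 + 2t² − t⁶ − t − t³ and σ₃(u) = 2 + 2t³ − t² − t⁵ − t, and moreover σ₅(u) = t⁵ · σ₂(u) and σ₄(u) = t⁴ · σ₃(u). Consequently, modulo the trivial units ±tᵏ, the six units σᵢ(u) for i ∈ (ℤ/7)ˣ fall into the three classes of u, σ₂(u) and σ₃(u). -/

import Mathlib

/-- `C₇`, the multiplicative cyclic group of order 7. -/
abbrev C7 : Type := Multiplicative (ZMod 7)

/-- The generator `t` of `C₇`, viewed inside the integral group ring `ℤ[C₇]`. -/
noncomputable def t : MonoidAlgebra ℤ C7 :=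
  MonoidAlgebra.of ℤ C7 (Multiplicative.ofAdd (1 : ZMod 7))

/-- The unit `u = 2 + 2t − t³ − t⁴ − t⁵` of `ℤ[C₇]`. -/
noncomputable def u : MonoidAlgebra ℤ C7 := 2 + 2 * t - t ^ 3 - t ^ 4 - t ^ 5

/-- `σᵢ`, the ring automorphism of `ℤ[C₇]` induced by the group automorphism `t ↦ tⁱ`. -/
noncomputable def sigma (i : ℕ) : MonoidAlgebra ℤ C7 →+* MonoidAlgebra ℤ C7 :=
  MonoidAlgebra.mapDomainRingHom ℤ (powMonoidHom i : C7 →* C7)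


lemma sigma_t (i : ℕ) : sigma i t = t ^ i := by
  show MonoidAlgebra.mapDomain _ _ = _
  rw [t, MonoidAlgebra.of_apply, MonoidAlgebra.mapDomain_single, MonoidAlgebra.single_pow,
    one_pow, powMonoidHom_apply]

lemma t7 : t ^ 7 = 1 := by
  rw [t, ← map_pow, ← ofAdd_nsmul]
  norm_num
  rfl

lemma ht : ∀ k : ℕ, t ^ (k + 7) = t ^ k := fun k => by rw [pow_add, t7, mul_one]

lemma sigma_u (i : ℕ) : sigma i u = 2 + 2 * t ^ i - t ^ (i * 3) - t ^ (i * 4) - t ^ (i * 5) := by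
  simp only [u, map_sub, map_add, map_mul, map_pow, map_ofNat, sigma_t, ← pow_mul]

/-- `σ₂(u) = 2 + 2t² − t⁶ − t − t³`, `σ₃(u) = 2 + 2t³ − t² − t⁵ − t`,
`σ₅(u) = t⁵·σ₂(u)` and `σ₄(u) = t⁴·σ₃(u)` in `ℤ[C₇]`; consequently, modulo trivial units
`±tᵏ`, the six units `σᵢ(u)` for `i ∈ (ℤ/7)ˣ` fall into the classes of `u`, `σ₂(u)`,
`σ₃(u)`. -/
theorem sigma_u_classes :
    sigma 2 u = 2 + 2 * t ^ 2 - t ^ 6 - t - t ^ 3 ∧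
    sigma 3 u = 2 + 2 * t ^ 3 - t ^ 2 - t ^ 5 - t ∧
    sigma 5 u = t ^ 5 * sigma 2 u ∧
    sigma 4 u = t ^ 4 * sigma 3 u := by
  have h2 : sigma 2 u = 2 + 2 * t ^ 2 - t ^ 6 - t - t ^ 3 := by
    rw [sigma_u]; norm_num
    rw [show (8:ℕ) = 1 + 7 from rfl, show (10:ℕ) = 3 + 7 from rfl, ht, ht, pow_one]
  have h3 : sigma 3 u = 2 + 2 * t ^ 3 - t ^ 2 - t ^ 5 - t := by
    rw [sigma_u]; norm_num
    rw [show (9:ℕ) = 2 + 7 from rfl, show (12:ℕ) = 5 + 7 from rfl,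
      show (15:ℕ) = 1 + 7 + 7 from rfl, ht, ht, ht, ht, pow_one]
  refine ⟨h2, h3, ?_, ?_⟩
  · rw [sigma_u, h2]; norm_num
    rw [show (15:ℕ) = 1 + 7 + 7 from rfl, show (20:ℕ) = 6 + 7 + 7 from rfl,
      show (25:ℕ) = 4 + 7 + 7 + 7 from rfl, ht, ht, ht, ht, ht, ht, ht, pow_one]
    ring_nf
    rw [show t ^ 11 = t ^ 4 from ht 4, show t ^ 7 = 1 from t7,
      show t ^ 8 = t from by rw [ht 1, pow_one]]
    ring
  · rw [sigma_u, h3]; norm_num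
    rw [show (12:ℕ) = 5 + 7 from rfl, show (16:ℕ) = 2 + 7 + 7 from rfl,
      show (20:ℕ) = 6 + 7 + 7 from rfl, ht, ht, ht, ht, ht]
    ring_nf
    rw [show t ^ 9 = t ^ 2 from ht 2, show t ^ 7 = 1 from t7]
    ring
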